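/- Let $\Phi$ be a traceless symmetric $m\times m$ real matrix, $m > 2$, and suppose $|\Phi|^2 = m h^2(1-h^2)$ for some $h \in (0,1)$, where $|\Phi|^2 = \operatorname{tr}(\Phi^2)$. If $0 \ge \left(m + m h^2 - \frac{|\Phi|^2}{h^2}\right)|\Phi|^2 + m \operatorname{tr}(\Phi^3)$, then $h \le \frac{m-2}{m}$. -/

import Mathlib

open Finset Matrix

/-- Cauchy–Schwarz bound on each coordinate of a zero-sum vector. -/
lemma coord_sq_bound {m : ℕ} (x : Fin m → ℝ) (hsum : ∑ i, x i = 0) (i : Fin m) :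
    (m : ℝ) * x i ^ 2 ≤ ((m : ℝ) - 1) * ∑ j, x j ^ 2 := by
  have hm : 0 < m := i.pos
  have h1 : x i + ∑ j ∈ univ.erase i, x j = 0 := by
    rw [Finset.add_sum_erase univ x (Finset.mem_univ i)]; exact hsum
  have h2 : (∑ j ∈ univ.erase i, x j) ^ 2
      ≤ (#(univ.erase i) : ℝ) * ∑ j ∈ univ.erase i, x j ^ 2 :=
    sq_sum_le_card_mul_sum_sq (s := univ.erase i) (f := x)
  have hcard : (#(univ.erase i) : ℝ) = (m : ℝ) - 1 := by
    rw [Finset.card_erase_of_mem (Finset.mem_univ i)]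
    simp [Nat.cast_sub hm]
  have h3 : ∑ j ∈ univ.erase i, x j ^ 2 = (∑ j, x j ^ 2) - x i ^ 2 := by
    rw [Finset.sum_erase_eq_sub (Finset.mem_univ i)]
  have h4 : ∑ j ∈ univ.erase i, x j = -x i := by linarith
  rw [hcard, h3, h4, neg_sq] at h2
  have hm1 : (1 : ℝ) ≤ m := by exact_mod_cast hm
  nlinarith [h2]

/-- Okumura's lemma for real scalars. -/
lemma okumura_sum {m : ℕ} (hm : 2 < m) (x : Fin m → ℝ) (hsum : ∑ i, x i = 0)
    (s : ℝ) (hs : 0 ≤ s) (hs2 : (m : ℝ) * ((m : ℝ) - 1) * s ^ 2 = ∑ i, x i ^ 2) :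
    ∑ i, x i ^ 3 ≥ -((m : ℝ) - 2) * s * ∑ i, x i ^ 2 := by
  have hm3 : (3 : ℝ) ≤ m := by exact_mod_cast hm
  have ht : 0 ≤ ((m : ℝ) - 1) * s := mul_nonneg (by linarith) hs
  have hbd : ∀ i, 0 ≤ x i + ((m : ℝ) - 1) * s := by
    intro i
    have h1 := coord_sq_bound x hsum i
    have hx2 : x i ^ 2 ≤ (((m : ℝ) - 1) * s) ^ 2 := by nlinarith [h1, hs2, hm3]
    have h5 : |x i| ≤ ((m : ℝ) - 1) * s := by
      have h6 := Real.sqrt_le_sqrt hx2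
      rwa [Real.sqrt_sq_eq_abs, Real.sqrt_sq ht] at h6
    linarith [neg_abs_le (x i)]
  have key : (0 : ℝ) ≤ ∑ i, (x i + ((m : ℝ) - 1) * s) * (x i - s) ^ 2 :=
    Finset.sum_nonneg fun i _ => mul_nonneg (hbd i) (sq_nonneg _)
  have expand : ∀ i : Fin m, (x i + ((m : ℝ) - 1) * s) * (x i - s) ^ 2
      = x i ^ 3 + (((m : ℝ) - 3) * s) * x i ^ 2 + ((s ^ 2 - 2 * ((m : ℝ) - 1) * s ^ 2)) * x i
        + ((m : ℝ) - 1) * s ^ 3 := by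
    intro i; ring
  rw [Finset.sum_congr rfl (fun i _ => expand i)] at key
  simp only [Finset.sum_add_distrib, ← Finset.mul_sum, hsum, mul_zero,
    Finset.sum_const, Finset.card_univ, Fintype.card_fin, nsmul_eq_mul] at key
  nlinarith [key, hs2, mul_le_mul_of_nonneg_right hm3 hs]

/-- Traces of powers of a hermitian matrix are power sums of eigenvalues. -/
lemma trace_pows {m : ℕ} {A : Matrix (Fin m) (Fin m) ℝ} (hA : A.IsHermitian) :
    A.trace = ∑ i, hA.eigenvalues i ∧
    (A * A).trace = ∑ i, hA.eigenvalues i ^ 2 ∧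
    (A * A * A).trace = ∑ i, hA.eigenvalues i ^ 3 := by
  set U : Matrix (Fin m) (Fin m) ℝ := (hA.eigenvectorUnitary : Matrix (Fin m) (Fin m) ℝ) with hU
  set D : Matrix (Fin m) (Fin m) ℝ := Matrix.diagonal (RCLike.ofReal ∘ hA.eigenvalues) with hD
  have hsp : A = U * D * star U := hA.spectral_theorem
  have hUU : star U * U = 1 := (Matrix.mem_unitaryGroup_iff').mp hA.eigenvectorUnitary.2
  have h1 : A.trace = D.trace := by
    rw [hsp, Matrix.trace_mul_cycle, hUU, one_mul]
  have h2 : (A * A).trace = (D * D).trace := by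
    rw [hsp]
    have e : (U * D * star U) * (U * D * star U) = U * (D * D) * star U := by
      rw [show U * D * star U * (U * D * star U) = U * (D * ((star U * U) * (D * star U))) by
        noncomm_ring]
      rw [hUU, one_mul]; noncomm_ring
    rw [e, Matrix.trace_mul_cycle, hUU, one_mul]
  have h3 : (A * A * A).trace = (D * D * D).trace := by
    rw [hsp]
    have e : (U * D * star U) * (U * D * star U) * (U * D * star U)
        = U * (D * D * D) * star U := by
      rw [show (U * D * star U) * (U * D * star U) * (U * D * star U)
        = U * (D * ((star U * U) * (D * ((star U * U) * (D * star U))))) by noncomm_ring]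
      rw [hUU, one_mul, one_mul]
      noncomm_ring
    rw [e, Matrix.trace_mul_cycle, hUU, one_mul]
  refine ⟨?_, ?_, ?_⟩
  · rw [h1, hD, Matrix.trace_diagonal]; simp
  · rw [h2, hD, Matrix.diagonal_mul_diagonal, Matrix.trace_diagonal]; simp [pow_two]
  · rw [h3, hD, Matrix.diagonal_mul_diagonal, Matrix.diagonal_mul_diagonal,
      Matrix.trace_diagonal]
    simp [pow_succ, pow_two, mul_assoc]

set_option maxHeartbeats 1000000 in
/-- Combining the Okumura Lemma with `|Φ|² = m h²(1-h²)` yields `h ≤ (m-2)/m`. -/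
theorem h_le_of_okumura (m : ℕ) (hm : 2 < m)
    (Φ : Matrix (Fin m) (Fin m) ℝ) (hΦs : Φ.IsSymm) (hΦtr : Φ.trace = 0)
    (h : ℝ) (h0 : 0 < h) (h1 : h < 1)
    (hnorm : (Φ * Φ).trace = (m : ℝ) * h ^ 2 * (1 - h ^ 2))
    (hineq : 0 ≥ ((m : ℝ) + (m : ℝ) * h ^ 2 - (Φ * Φ).trace / h ^ 2) * (Φ * Φ).trace
        + (m : ℝ) * (Φ * Φ * Φ).trace) :
    h ≤ ((m : ℝ) - 2) / m := by
  have hA : Φ.IsHermitian := by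
    simpa [Matrix.IsHermitian, Matrix.conjTranspose_eq_transpose_of_trivial, Matrix.IsSymm] using hΦs
  obtain ⟨t1, t2, t3⟩ := trace_pows hA
  set x : Fin m → ℝ := hA.eigenvalues with hx
  have hm3 : (3 : ℝ) ≤ m := by exact_mod_cast hm
  have hmpos : (0 : ℝ) < m := by linarith
  have hm1 : (m : ℝ) - 1 ≠ 0 := by linarith
  have hh2 : h ^ 2 < 1 := by nlinarith
  have hsum : ∑ i, x i = 0 := by rw [← t1, hΦtr]
  set s : ℝ := Real.sqrt ((1 - h ^ 2) / ((m : ℝ) - 1)) * h with hsdef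
  have hs : 0 ≤ s := mul_nonneg (Real.sqrt_nonneg _) h0.le
  have hssq : Real.sqrt ((1 - h ^ 2) / ((m : ℝ) - 1)) ^ 2 = (1 - h ^ 2) / ((m : ℝ) - 1) :=
    Real.sq_sqrt (div_nonneg (by linarith) (by linarith))
  have hs2' : ((m : ℝ) - 1) * s ^ 2 = (1 - h ^ 2) * h ^ 2 := by
    rw [hsdef, mul_pow, hssq]; field_simp
  have hs2 : (m : ℝ) * ((m : ℝ) - 1) * s ^ 2 = ∑ i, x i ^ 2 := by
    rw [← t2, hnorm, mul_assoc, hs2']; ring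
  have hok := okumura_sum hm x hsum s hs hs2
  rw [← t2] at hok
  rw [← t3] at hok
  have hQpos : 0 < (Φ * Φ).trace := by
    rw [hnorm]
    exact mul_pos (mul_pos hmpos (pow_pos h0 2)) (by linarith)
  have hdiv : (Φ * Φ).trace / h ^ 2 = (m : ℝ) * (1 - h ^ 2) := by
    rw [hnorm]; field_simp
  rw [hdiv] at hineq
  have hkey : 2 * h ^ 2 ≤ ((m : ℝ) - 2) * s := by
    nlinarith [hineq, mul_le_mul_of_nonneg_left hok hmpos.le, mul_pos hmpos hQpos, hok]
  have hsq : 4 * h ^ 4 ≤ ((m : ℝ) - 2) ^ 2 * s ^ 2 := by nlinarith [hkey, hs]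
  have hA2 : 4 * ((m : ℝ) - 1) * h ^ 4 ≤ ((m : ℝ) - 2) ^ 2 * ((1 - h ^ 2) * h ^ 2) := by
    have := mul_le_mul_of_nonneg_left hsq (by linarith : (0:ℝ) ≤ (m : ℝ) - 1)
    nlinarith [this, hs2']
  have hfin : ((m : ℝ) * h) ^ 2 ≤ ((m : ℝ) - 2) ^ 2 := by
    nlinarith [hA2, pow_pos h0 2]
  have hroot : (m : ℝ) * h ≤ (m : ℝ) - 2 := by
    have h6 := Real.sqrt_le_sqrt hfin
    rwa [Real.sqrt_sq (by positivity), Real.sqrt_sq (by linarith)] at h6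
  rw [le_div_iff₀ hmpos]
  linarith
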